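/- The function h(u,v) = 3/(2 sinh²(√3(u+v)/2)) + 1, defined for u+v ≠ 0, satisfies the Țițeica PDE (log h)_{uv} = h - 1/h². -/

import Mathlib

open Real

/-- Closed form of `d/dt log(3/(2 sinh²(√3 t/2)) + 1)`. -/
noncomputable def Gt (t : ℝ) : ℝ :=
  -3 * Real.sqrt 3 * Real.cosh (Real.sqrt 3 * t / 2) /
    (Real.sinh (Real.sqrt 3 * t / 2) * (3 + 2 * Real.sinh (Real.sqrt 3 * t / 2) ^ 2))

lemma sinh_ne (t : ℝ) (ht : t ≠ 0) : Real.sinh (Real.sqrt 3 * t / 2) ≠ 0 := by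
  have h3 : Real.sqrt 3 ≠ 0 := by positivity
  have harg : Real.sqrt 3 * t / 2 ≠ 0 := by
    simp [div_eq_zero_iff, mul_eq_zero, h3, ht]
  simpa [Real.sinh_eq_zero] using harg

lemma arg_hasDerivAt (t : ℝ) :
    HasDerivAt (fun s : ℝ => Real.sqrt 3 * s / 2) (Real.sqrt 3 / 2) t := by
  simpa using ((hasDerivAt_id t).const_mul (Real.sqrt 3)).div_const 2

lemma phi_hasDerivAt (t : ℝ) (ht : t ≠ 0) :
    HasDerivAt (fun s => Real.log (3 / (2 * Real.sinh (Real.sqrt 3 * s / 2) ^ 2) + 1))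
      (Gt t) t := by
  set a := Real.sqrt 3 with ha
  have hS := sinh_ne t ht
  have h1 := arg_hasDerivAt t
  have h2 : HasDerivAt (fun s : ℝ => Real.sinh (a * s / 2))
      (Real.cosh (a * t / 2) * (a / 2)) t := (Real.hasDerivAt_sinh _).comp t h1
  have h3 : HasDerivAt (fun s : ℝ => 2 * Real.sinh (a * s / 2) ^ 2)
      (2 * ((2 : ℕ) * Real.sinh (a * t / 2) ^ 1 * (Real.cosh (a * t / 2) * (a / 2)))) t :=
    (h2.pow 2).const_mul 2
  have hden : 2 * Real.sinh (a * t / 2) ^ 2 ≠ 0 := by positivity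
  have h4 := ((hasDerivAt_const t (3:ℝ)).div h3 hden).add_const 1
  have hpos : 3 / (2 * Real.sinh (a * t / 2) ^ 2) + 1 ≠ 0 := by positivity
  have h5 := h4.log hpos
  convert h5 using 1
  · rfl
  unfold Gt
  rw [← ha]
  simp only [Pi.div_apply]
  have hS' : Real.sinh (a * t / 2) ≠ 0 := hS
  field_simp
  ring

lemma Gt_hasDerivAt (t : ℝ) (ht : t ≠ 0) :
    HasDerivAt Gt
      ((-3 * Real.sqrt 3 * (Real.sinh (Real.sqrt 3 * t / 2) * (Real.sqrt 3 / 2)) *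
          (Real.sinh (Real.sqrt 3 * t / 2) * (3 + 2 * Real.sinh (Real.sqrt 3 * t / 2) ^ 2)) -
        -3 * Real.sqrt 3 * Real.cosh (Real.sqrt 3 * t / 2) *
          (Real.cosh (Real.sqrt 3 * t / 2) * (Real.sqrt 3 / 2) *
              (3 + 2 * Real.sinh (Real.sqrt 3 * t / 2) ^ 2) +
            Real.sinh (Real.sqrt 3 * t / 2) *
              (2 * ((2 : ℕ) * Real.sinh (Real.sqrt 3 * t / 2) ^ 1 *
                (Real.cosh (Real.sqrt 3 * t / 2) * (Real.sqrt 3 / 2)))))) /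
        (Real.sinh (Real.sqrt 3 * t / 2) * (3 + 2 * Real.sinh (Real.sqrt 3 * t / 2) ^ 2)) ^ 2)
      t := by
  set a := Real.sqrt 3 with ha
  have hS := sinh_ne t ht
  have h1 := arg_hasDerivAt t
  have h2 : HasDerivAt (fun s : ℝ => Real.sinh (a * s / 2))
      (Real.cosh (a * t / 2) * (a / 2)) t := (Real.hasDerivAt_sinh _).comp t h1
  have h2c : HasDerivAt (fun s : ℝ => Real.cosh (a * s / 2))
      (Real.sinh (a * t / 2) * (a / 2)) t := (Real.hasDerivAt_cosh _).comp t h1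
  have hnum : HasDerivAt (fun s : ℝ => -3 * a * Real.cosh (a * s / 2))
      (-3 * a * (Real.sinh (a * t / 2) * (a / 2))) t := h2c.const_mul _
  have hd2 : HasDerivAt (fun s : ℝ => 3 + 2 * Real.sinh (a * s / 2) ^ 2)
      (2 * ((2 : ℕ) * Real.sinh (a * t / 2) ^ 1 * (Real.cosh (a * t / 2) * (a / 2)))) t :=
    ((h2.pow 2).const_mul 2).const_add 3
  have hden : HasDerivAt (fun s : ℝ =>
      Real.sinh (a * s / 2) * (3 + 2 * Real.sinh (a * s / 2) ^ 2))
      (Real.cosh (a * t / 2) * (a / 2) * (3 + 2 * Real.sinh (a * t / 2) ^ 2) +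
        Real.sinh (a * t / 2) *
          (2 * ((2 : ℕ) * Real.sinh (a * t / 2) ^ 1 * (Real.cosh (a * t / 2) * (a / 2))))) t :=
    h2.mul hd2
  have hd0 : Real.sinh (a * t / 2) * (3 + 2 * Real.sinh (a * t / 2) ^ 2) ≠ 0 := by
    apply mul_ne_zero hS
    positivity
  exact hnum.div hden hd0

/-- The function `h(u,v) = 3/(2 sinh²(√3(u+v)/2)) + 1`, for `u+v ≠ 0`, satisfies the
Țițeica PDE `(log h)_{uv} = h - 1/h²`. -/
theorem stmt_2 (h : ℝ → ℝ → ℝ)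
    (hdef : ∀ u v : ℝ, h u v = 3 / (2 * Real.sinh (Real.sqrt 3 * (u + v) / 2) ^ 2) + 1) :
    ∀ u v : ℝ, u + v ≠ 0 →
      deriv (fun v' => deriv (fun u' => Real.log (h u' v')) u) v
        = h u v - 1 / (h u v) ^ 2 := by
  intro u v huv
  -- inner derivative equality, valid whenever u + v' ≠ 0
  have inner_eq : ∀ v' : ℝ, u + v' ≠ 0 →
      deriv (fun u' => Real.log (h u' v')) u = Gt (u + v') := by
    intro v' hv'
    have hcomp : HasDerivAt (fun u' => Real.log (h u' v')) (Gt (u + v') * 1) u := by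
      have := (phi_hasDerivAt (u + v') hv').comp u ((hasDerivAt_id u).add_const v')
      simpa [Function.comp_def, hdef] using this
    simpa using hcomp.deriv
  -- the outer function eventually equals v' ↦ Gt (u + v')
  have hopen : IsOpen {v' : ℝ | u + v' ≠ 0} :=
    isOpen_compl_singleton.preimage (continuous_const.add continuous_id)
  have hev : (fun v' => deriv (fun u' => Real.log (h u' v')) u) =ᶠ[nhds v]
      (fun v' => Gt (u + v')) := by
    filter_upwards [hopen.mem_nhds huv] with v' hv'
    exact inner_eq v' hv'
  rw [hev.deriv_eq]
  have hGt : HasDerivAt (fun v' => Gt (u + v')) _ v :=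
    (Gt_hasDerivAt (u + v) huv).comp v ((hasDerivAt_const v u).add (hasDerivAt_id v))
  rw [(by simpa using hGt : HasDerivAt (fun v' => Gt (u + v')) _ v).deriv]
  -- final algebraic identity
  rw [hdef]
  set S := Real.sinh (Real.sqrt 3 * (u + v) / 2) with hSdef
  set C := Real.cosh (Real.sqrt 3 * (u + v) / 2) with hCdef
  have hS : S ≠ 0 := sinh_ne (u + v) huv
  have hC2 : C ^ 2 = 1 + S ^ 2 := by rw [hSdef, hCdef, Real.cosh_sq']
  have ha : Real.sqrt 3 ^ 2 = 3 := Real.sq_sqrt (by norm_num)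
  have hh : 3 / (2 * S ^ 2) + 1 ≠ 0 := by positivity
  have h32 : (3 : ℝ) + 2 * S ^ 2 ≠ 0 := by positivity
  field_simp
  linear_combination
    (9*Real.sqrt 3^2 + 18*S^2*Real.sqrt 3^2) * hC2 +
    (9 + 18*S^2 + 12*S^4) * ha
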